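/- Let (Ω, ℱ, ℙ) be a probability space, let j_max ∈ ℕ, let X_0, X_1, …, X_{j_max} : Ω → ℝ^d be integrable random vectors, and let N be a Geometric(1/2) random variable independent of (X_0, …, X_{j_max}). Define the truncated MLMC estimator Y = X_0 + 2^N (X_N − X_{N−1}) on the event {1 ≤ N ≤ j_max}, and Y = X_0 on its complement. Then E[Y] = E[X_{j_max}]. -/

import Mathlib

open MeasureTheory ProbabilityTheory

lemma helper1 {Ω : Type*} [MeasurableSpace Ω] (μ : Measure Ω) [IsProbabilityMeasure μ]
    {d : ℕ} {s : Set Ω} (hs : MeasurableSet s) {g : Ω → EuclideanSpace ℝ (Fin d)}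
    (hg : Integrable g μ)
    (hi : IndepFun (s.indicator (fun _ => (1:ℝ))) g μ) :
    ∫ ω, s.indicator g ω ∂μ = (μ s).toReal • ∫ ω, g ω ∂μ := by
  have hind : Integrable (s.indicator g) μ := hg.indicator hs
  ext i
  have h1 : (∫ ω, s.indicator g ω ∂μ) i
      = ∫ ω, (s.indicator g ω) i ∂μ := by
    have := (EuclideanSpace.proj (𝕜 := ℝ) i).integral_comp_comm hind
    simpa using this.symm
  have h2 : (∫ ω, g ω ∂μ) i = ∫ ω, g ω i ∂μ := by
    have := (EuclideanSpace.proj (𝕜 := ℝ) i).integral_comp_comm hg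
    simpa using this.symm
  have h3 : ∀ ω, (s.indicator g ω) i = s.indicator (fun _ => (1:ℝ)) ω * g ω i := by
    intro ω
    by_cases h : ω ∈ s <;> simp [Set.indicator_apply, h]
  have hi' : IndepFun (s.indicator (fun _ => (1:ℝ))) (fun ω => g ω i) μ := by
    have := hi.comp measurable_id ((EuclideanSpace.proj (𝕜 := ℝ) i).continuous.measurable)
    exact this
  have hgint : Integrable (fun ω => g ω i) μ := by
    have := (EuclideanSpace.proj (𝕜 := ℝ) i).integrable_comp hg
    simpa using this
  have hindic : Integrable (s.indicator (fun _ => (1:ℝ))) μ :=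
    (integrable_const (1:ℝ)).indicator hs
  rw [PiLp.smul_apply, h1, h2]
  calc ∫ ω, (s.indicator g ω) i ∂μ
      = ∫ ω, s.indicator (fun _ => (1:ℝ)) ω * g ω i ∂μ :=
        integral_congr_ae (Filter.Eventually.of_forall h3)
    _ = (∫ ω, s.indicator (fun _ => (1:ℝ)) ω ∂μ) * ∫ ω, g ω i ∂μ :=
        hi'.integral_fun_mul_eq_mul_integral hindic.aestronglyMeasurable hgint.aestronglyMeasurable
    _ = (μ s).toReal • ∫ ω, g ω i ∂μ := by
        rw [integral_indicator_const _ hs]; simp [smul_eq_mul, Measure.real]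

theorem stmt_4 {Ω : Type*} [MeasurableSpace Ω] (μpr : Measure Ω) [IsProbabilityMeasure μpr]
    (d jmax : ℕ)
    (X : ℕ → Ω → EuclideanSpace ℝ (Fin d))
    (hXmeas : ∀ j, Measurable (X j))
    (hXint : ∀ j ≤ jmax, Integrable (X j) μpr)
    (N : Ω → ℕ) (hNmeas : Measurable N)
    (hgeom : ∀ j : ℕ, 1 ≤ j → μpr {ω | N ω = j} = (1 / 2 : ENNReal) ^ j)
    (hindep : IndepFun N (fun ω => fun j : Fin (jmax + 1) => X j ω) μpr)
    (Y : Ω → EuclideanSpace ℝ (Fin d))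
    (hY : ∀ ω, Y ω =
      if 1 ≤ N ω ∧ N ω ≤ jmax then
        X 0 ω + ((2 : ℝ) ^ N ω) • (X (N ω) ω - X (N ω - 1) ω)
      else X 0 ω) :
    ∫ ω, Y ω ∂μpr = ∫ ω, X jmax ω ∂μpr := by
  set g : ℕ → Ω → EuclideanSpace ℝ (Fin d) :=
    fun j ω => ((2:ℝ) ^ j) • (X j ω - X (j-1) ω) with hgdef
  -- representation of Y as sum of indicators
  have hYrep : ∀ ω, Y ω = X 0 ω + ∑ j ∈ Finset.Icc 1 jmax,
      Set.indicator {ω' | N ω' = j} (g j) ω := by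
    intro ω
    rw [hY ω]
    have hrw : ∀ j ∈ Finset.Icc 1 jmax, Set.indicator {ω' | N ω' = j} (g j) ω
        = if N ω = j then g j ω else 0 := by
      intro j _; simp [Set.indicator_apply]
    rw [Finset.sum_congr rfl hrw, Finset.sum_ite_eq (Finset.Icc 1 jmax) (N ω) (fun j => g j ω)]
    by_cases h : 1 ≤ N ω ∧ N ω ≤ jmax
    · rw [if_pos h, if_pos (Finset.mem_Icc.mpr h)]
    · rw [if_neg h, if_neg (fun hm => h (Finset.mem_Icc.mp hm)), add_zero]
  -- integrability of g j
  have hgint : ∀ j ∈ Finset.Icc 1 jmax, Integrable (g j) μpr := by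
    intro j hj
    obtain ⟨h1, h2⟩ := Finset.mem_Icc.mp hj
    exact (((hXint j h2).sub (hXint (j-1) (by omega))).smul ((2:ℝ)^j))
  -- independence of the event {N = j} and g j
  have hindj : ∀ j ∈ Finset.Icc 1 jmax,
      IndepFun (Set.indicator {ω' | N ω' = j} (fun _ => (1:ℝ))) (g j) μpr := by
    intro j hj
    obtain ⟨h1, h2⟩ := Finset.mem_Icc.mp hj
    have hφ : Measurable (fun n : ℕ => if n = j then (1:ℝ) else 0) :=
      measurable_from_top
    have hψ : Measurable (fun v : Fin (jmax+1) → EuclideanSpace ℝ (Fin d) =>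
        ((2:ℝ)^j) • (v ⟨j, by omega⟩ - v ⟨j-1, by omega⟩)) :=
      by fun_prop
    have := hindep.comp hφ hψ
    have he1 : (fun n : ℕ => if n = j then (1:ℝ) else 0) ∘ N
        = Set.indicator {ω' | N ω' = j} (fun _ => (1:ℝ)) := by
      funext ω; simp [Function.comp, Set.indicator_apply]
    have he2 : (fun v : Fin (jmax+1) → EuclideanSpace ℝ (Fin d) =>
        ((2:ℝ)^j) • (v ⟨j, by omega⟩ - v ⟨j-1, by omega⟩)) ∘
        (fun ω => fun k : Fin (jmax + 1) => X k ω) = g j := by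
      funext ω; simp [Function.comp, hgdef]
    rwa [he1, he2] at this
  have hsmeas : ∀ j : ℕ, MeasurableSet {ω' | N ω' = j} :=
    fun j => hNmeas (measurableSet_singleton j)
  -- integral of each indicator term
  have hterm : ∀ j ∈ Finset.Icc 1 jmax,
      ∫ ω, Set.indicator {ω' | N ω' = j} (g j) ω ∂μpr
        = (∫ ω, X j ω ∂μpr) - ∫ ω, X (j-1) ω ∂μpr := by
    intro j hj
    obtain ⟨h1, h2⟩ := Finset.mem_Icc.mp hj
    rw [helper1 μpr (hsmeas j) (hgint j hj) (hindj j hj), hgeom j h1]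
    have : ∫ ω, g j ω ∂μpr = ((2:ℝ)^j) • ((∫ ω, X j ω ∂μpr) - ∫ ω, X (j-1) ω ∂μpr) := by
      rw [hgdef]
      rw [integral_smul, integral_sub (hXint j h2) (hXint (j-1) (by omega))]
    rw [this, smul_smul]
    have hc : ((1 / 2 : ENNReal) ^ j).toReal * (2:ℝ)^j = 1 := by
      rw [ENNReal.toReal_pow]
      norm_num
      rw [← mul_pow]
      norm_num
    rw [hc, one_smul]
  -- integrability of each indicator term
  have htermint : ∀ j ∈ Finset.Icc 1 jmax,
      Integrable (Set.indicator {ω' | N ω' = j} (g j)) μpr :=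
    fun j hj => (hgint j hj).indicator (hsmeas j)
  calc ∫ ω, Y ω ∂μpr
      = ∫ ω, (X 0 ω + ∑ j ∈ Finset.Icc 1 jmax,
          Set.indicator {ω' | N ω' = j} (g j) ω) ∂μpr :=
        integral_congr_ae (Filter.Eventually.of_forall hYrep)
    _ = (∫ ω, X 0 ω ∂μpr) + ∫ ω, (∑ j ∈ Finset.Icc 1 jmax,
          Set.indicator {ω' | N ω' = j} (g j) ω) ∂μpr := by
        rw [integral_add (hXint 0 (Nat.zero_le _)) (integrable_finset_sum _ htermint)]
    _ = (∫ ω, X 0 ω ∂μpr) + ∑ j ∈ Finset.Icc 1 jmax,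
          ∫ ω, Set.indicator {ω' | N ω' = j} (g j) ω ∂μpr := by
        rw [integral_finset_sum _ htermint]
    _ = (∫ ω, X 0 ω ∂μpr) + ∑ j ∈ Finset.Icc 1 jmax,
          ((∫ ω, X j ω ∂μpr) - ∫ ω, X (j-1) ω ∂μpr) := by
        rw [Finset.sum_congr rfl hterm]
    _ = ∫ ω, X jmax ω ∂μpr := by
        have htel : ∑ j ∈ Finset.Icc 1 jmax,
            ((∫ ω, X j ω ∂μpr) - ∫ ω, X (j-1) ω ∂μpr)
            = (∫ ω, X jmax ω ∂μpr) - ∫ ω, X 0 ω ∂μpr := by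
          rw [← Finset.Ico_add_one_right_eq_Icc, Finset.sum_Ico_eq_sum_range]
          have : ∀ i ∈ Finset.range (jmax + 1 - 1),
              ((∫ ω, X (1+i) ω ∂μpr) - ∫ ω, X (1+i-1) ω ∂μpr)
              = ((∫ ω, X (i+1) ω ∂μpr) - ∫ ω, X i ω ∂μpr) := by
            intro i _
            rw [Nat.add_comm 1 i]
            simp
          rw [Finset.sum_congr rfl this]
          simpa using Finset.sum_range_sub (fun k => ∫ ω, X k ω ∂μpr) jmax
        rw [htel]
        abel
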